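/- arXiv:1006.1410 — 2 statements merged into one kernel-verified Lean document; each statement's English description precedes it below -/
import Mathlib

section
/- Let 𝒢 = (G, 𝓕₀, 𝓕₁) be a Muller game, let v be a vertex, and let σ be a winning strategy for Player i from v in 𝒢 such that every play ρ starting in v and consistent with σ satisfies maxscore_{𝓕_{1−i}}(ρ) ≤ 2. Then Player i has a winning strategy from v in the finite-time Muller game (G, 𝓕₀, 𝓕₁, 3) with threshold 3; in particular, for every play ρ starting in v consistent with σ, the shortest prefix w of ρ with maxscore_{2^V}(w) = 3 satisfies score_F(w) = 3 for a unique set F, and this F belongs to 𝓕ᵢ. -/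
/- Common definitions for finite-time Muller games, following
   McNaughton / Fearnley-Zimmermann. -/

universe u

variable {V : Type u}

/-- The occurrence set of a finite word: the set of letters occurring in it. -/
def occ (x : List V) : Set V := {v | v ∈ x}

/-- `score F w` is the maximal `k` such that some suffix of `w` decomposes as
`x₁ ⋯ x_k` with every `xᵢ` non-empty and `occ xᵢ = F` (with `max ∅ = 0`). -/
noncomputable def score (F : Set V) (w : List V) : ℕ :=
  sSup {k | ∃ xs : List (List V), xs.length = k ∧
    (∀ x ∈ xs, x ≠ [] ∧ occ x = F) ∧ xs.flatten <:+ w}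

/-- `maxscore 𝓕 w` is the maximum of `score F u` over `F ∈ 𝓕` and non-empty
prefixes `u` of `w`. -/
noncomputable def maxscore (𝓕 : Set (Set V)) (w : List V) : ℕ :=
  sSup {n | ∃ F ∈ 𝓕, ∃ u : List V, u ≠ [] ∧ u <+: w ∧ n = score F u}

/-- `AccGood F w x` : `x` is a suffix of `w` with `occ x ⊆ F` such that removing
any suffix `y` of `x` from `w` does not change the score of `F`. -/
def AccGood (F : Set V) (w x : List V) : Prop :=
  x <:+ w ∧ occ x ⊆ F ∧
    ∀ y : List V, y <:+ x → score F (w.take (w.length - y.length)) = score F w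

/-- The accumulator `acc F w` : the occurrence set of the longest suffix `x` of `w`
with `occ x ⊆ F` such that the score of `F` did not change during `x`. -/
noncomputable def acc (F : Set V) (w : List V) : Set V :=
  occ (w.drop (sInf {i | AccGood F w (w.drop i)}))

/-- A non-empty word `w` is an `𝓕`-burden if `maxscore 𝓕 w ≤ 2` and for every
`F ∈ 𝓕` either `score F w = 0`, or `score F w = 1` and `acc F w = ∅`. -/
def Burden (𝓕 : Set (Set V)) (w : List V) : Prop :=
  w ≠ [] ∧ maxscore 𝓕 w ≤ 2 ∧
    ∀ F ∈ 𝓕, score F w = 0 ∨ (score F w = 1 ∧ acc F w = ∅)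

/-- The maxscore of an infinite sequence: the supremum (in `ℕ∞`) of the scores of
sets `F ∈ 𝓕` over all non-empty finite prefixes. -/
noncomputable def maxscoreInf (𝓕 : Set (Set V)) (ρ : ℕ → V) : ℕ∞ :=
  ⨆ F ∈ 𝓕, ⨆ n : ℕ, (score F ((List.range (n + 1)).map ρ) : ℕ∞)

/-- The set of elements occurring infinitely often in the sequence `ρ`. -/
def limitSet (ρ : ℕ → V) : Set V := {v | ∀ N : ℕ, ∃ n, N ≤ n ∧ ρ n = v}

/-- The indicator of a play: the union of all `F ∈ 𝓕` with positive score
together with all non-empty accumulators of members of `𝓕`. -/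
noncomputable def ind (𝓕 : Set (Set V)) (w : List V) : Set V :=
  (⋃ F ∈ {F ∈ 𝓕 | 0 < score F w}, F) ∪ ⋃ F ∈ {F ∈ 𝓕 | acc F w ≠ ∅}, acc F w

/-- An arena: a finite directed graph together with the set `V0` of vertices of
Player 0 (Player 1 owns the complement), where every vertex has a successor. -/
structure Arena (V : Type u) where
  V0 : Set V
  E : V → V → Prop
  exists_succ : ∀ v, ∃ u, E v u

/-- The positions of Player `i`. -/
def Arena.pos (G : Arena V) (i : Fin 2) : Set V :=
  if i = 0 then G.V0 else G.V0ᶜ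

/-- A strategy maps a history (the play so far, excluding the current vertex)
and the current vertex to a successor vertex. -/
abbrev Strategy (V : Type u) := List V → V → V

/-- A strategy is legal if it always moves along edges. -/
def Arena.Legal (G : Arena V) (σ : Strategy V) : Prop :=
  ∀ w v, G.E v (σ w v)

/-- An infinite play in `G` starting in `v`. -/
def Arena.IsPlay (G : Arena V) (v : V) (ρ : ℕ → V) : Prop :=
  ρ 0 = v ∧ ∀ n, G.E (ρ n) (ρ (n + 1))

/-- An infinite play is consistent with the strategy `σ` of Player `i`. -/
def Arena.ConsistentInf (G : Arena V) (i : Fin 2) (σ : Strategy V) (ρ : ℕ → V) : Prop :=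
  ∀ n, ρ n ∈ G.pos i → ρ (n + 1) = σ ((List.range n).map ρ) (ρ n)

/-- Player `i` (with winning condition `𝓕i`) wins the Muller game from `v`. -/
def Arena.MullerWinFrom (G : Arena V) (i : Fin 2) (𝓕i : Set (Set V)) (v : V) : Prop :=
  ∃ σ : Strategy V, G.Legal σ ∧
    ∀ ρ : ℕ → V, G.IsPlay v ρ → G.ConsistentInf i σ ρ → limitSet ρ ∈ 𝓕i

/-- The winning region of Player `i` in the Muller game. -/
def Arena.MullerWinRegion (G : Arena V) (i : Fin 2) (𝓕i : Set (Set V)) : Set V :=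
  {v | G.MullerWinFrom i 𝓕i v}

/-- A finite play is consistent with the strategy `σ` of Player `i`. -/
def Arena.ConsistentFin (G : Arena V) (i : Fin 2) (σ : Strategy V) (w : List V) : Prop :=
  ∀ (u : List V) (v x : V), u ++ [v, x] <+: w → v ∈ G.pos i → x = σ u v

/-- A play of the finite-time Muller game with threshold `k`: a finite path
whose maxscore (over all subsets) is exactly `k`, while the maxscore of
its proper prefixes is `< k`. -/
def FTPlay (G : Arena V) (k : ℕ) (w : List V) : Prop :=
  w.Chain' G.E ∧ maxscore (Set.univ : Set (Set V)) w = k ∧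
    maxscore (Set.univ : Set (Set V)) w.dropLast < k

/-- Player `i` wins the finite-time Muller game with threshold `k` from `v`. -/
def FTWinFrom (G : Arena V) (i : Fin 2) (𝓕i : Set (Set V)) (k : ℕ) (v : V) : Prop :=
  ∃ σ : Strategy V, G.Legal σ ∧
    ∀ w : List V, FTPlay G k w → w.head? = some v → G.ConsistentFin i σ w →
      ∃ F ∈ 𝓕i, score F w = k

/-- The winning region of Player `i` in the finite-time Muller game. -/
def FTWinRegion (G : Arena V) (i : Fin 2) (𝓕i : Set (Set V)) (k : ℕ) : Set V :=
  {v | FTWinFrom G i 𝓕i k v}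

/-- A play of McNaughton's finite-time Muller game: a finite path such that some
set `F` reaches score `|F|! + 1`, while no set did so in a proper prefix. -/
def McNPlay (G : Arena V) (w : List V) : Prop :=
  w.Chain' G.E ∧ (∃ F : Set V, score F w = F.ncard.factorial + 1) ∧
    ∀ u : List V, u <+: w → u ≠ w →
      ∀ F : Set V, score F u ≠ F.ncard.factorial + 1

/-- Player `i` wins McNaughton's finite-time Muller game from `v`. -/
def McNWinFrom (G : Arena V) (i : Fin 2) (𝓕i : Set (Set V)) (v : V) : Prop :=
  ∃ σ : Strategy V, G.Legal σ ∧
    ∀ w : List V, McNPlay G w → w.head? = some v → G.ConsistentFin i σ w →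
      ∃ F ∈ 𝓕i, score F w = F.ncard.factorial + 1

/-- The winning region of Player `i` in McNaughton's finite-time Muller game. -/
def McNWinRegion (G : Arena V) (i : Fin 2) (𝓕i : Set (Set V)) : Set V :=
  {v | McNWinFrom G i 𝓕i v}

open Classical in
/-- The list `ρ₀ ⋯ ρₙ` of the first `n+1` vertices of the unique play that starts
in `v` and is consistent with the strategy `σ` of Player `i` and the strategy `τ`
of the other player. -/
noncomputable def playList (G : Arena V) (i : Fin 2) (σ τ : Strategy V) (v : V) :
    ℕ → List V
  | 0 => [v]
  | n + 1 =>
      let w := playList G i σ τ v n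
      let u := w.getLastD v
      w ++ [if u ∈ G.pos i then σ w.dropLast u else τ w.dropLast u]

/-- `playOf G i σ τ v` : the unique play starting in `v` that is consistent with
the strategy `σ` of Player `i` and the strategy `τ` of the other player. -/
noncomputable def playOf (G : Arena V) (i : Fin 2) (σ τ : Strategy V) (v : V)
    (n : ℕ) : V :=
  (playList G i σ τ v n).getLastD v


/- ## Auxiliary lemmas -/

lemma length_le_flatten {xs : List (List V)} (h : ∀ x ∈ xs, x ≠ []) :
    xs.length ≤ xs.flatten.length := by
  induction xs with
  | nil => simp
  | cons a t ih =>
    simp only [List.flatten_cons, List.length_append, List.length_cons]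
    have ha : a ≠ [] := (h a (by simp))
    have : 1 ≤ a.length := List.length_pos_iff.mpr ha
    have := ih (fun x hx => h x (by simp [hx]))
    omega

lemma scoreSet_bdd (F : Set V) (w : List V) :
    BddAbove {k | ∃ xs : List (List V), xs.length = k ∧
      (∀ x ∈ xs, x ≠ [] ∧ occ x = F) ∧ xs.flatten <:+ w} := by
  refine ⟨w.length, fun k hk => ?_⟩
  obtain ⟨xs, rfl, h1, h2⟩ := hk
  exact (length_le_flatten (fun x hx => (h1 x hx).1)).trans h2.length_le

lemma le_score {F : Set V} {w : List V} {xs : List (List V)}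
    (h1 : ∀ x ∈ xs, x ≠ [] ∧ occ x = F) (h2 : xs.flatten <:+ w) :
    xs.length ≤ score F w :=
  le_csSup (scoreSet_bdd F w) ⟨xs, rfl, h1, h2⟩

lemma score_witness (F : Set V) (w : List V) :
    ∃ xs : List (List V), xs.length = score F w ∧
      (∀ x ∈ xs, x ≠ [] ∧ occ x = F) ∧ xs.flatten <:+ w :=
  Nat.sSup_mem (s := {k | ∃ xs : List (List V), xs.length = k ∧
      (∀ x ∈ xs, x ≠ [] ∧ occ x = F) ∧ xs.flatten <:+ w})
    ⟨0, [], rfl, by simp, by simp⟩ (scoreSet_bdd F w)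

lemma score_le_length (F : Set V) (w : List V) : score F w ≤ w.length := by
  obtain ⟨xs, h0, h1, h2⟩ := score_witness F w
  rw [← h0]
  exact (length_le_flatten (fun x hx => (h1 x hx).1)).trans h2.length_le

lemma maxscoreSet_bdd (𝓕 : Set (Set V)) (w : List V) :
    BddAbove {n | ∃ F ∈ 𝓕, ∃ u : List V, u ≠ [] ∧ u <+: w ∧ n = score F u} := by
  refine ⟨w.length, fun n hn => ?_⟩
  obtain ⟨F, _, u, _, hu, rfl⟩ := hn
  exact (score_le_length F u).trans hu.length_le

lemma score_le_maxscore {𝓕 : Set (Set V)} {F : Set V} {u w : List V}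
    (hF : F ∈ 𝓕) (hne : u ≠ []) (hu : u <+: w) : score F u ≤ maxscore 𝓕 w :=
  le_csSup (maxscoreSet_bdd 𝓕 w) ⟨F, hF, u, hne, hu, rfl⟩

lemma maxscore_witness {𝓕 : Set (Set V)} {w : List V} (h : maxscore 𝓕 w ≠ 0) :
    ∃ F ∈ 𝓕, ∃ u : List V, u ≠ [] ∧ u <+: w ∧ maxscore 𝓕 w = score F u := by
  have hne : {n | ∃ F ∈ 𝓕, ∃ u : List V, u ≠ [] ∧ u <+: w ∧ n = score F u}.Nonempty := by
    by_contra hc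
    rw [Set.not_nonempty_iff_eq_empty] at hc
    exact h (by simp [maxscore, hc])
  exact Nat.sSup_mem hne (maxscoreSet_bdd 𝓕 w)

lemma maxscore_nil (𝓕 : Set (Set V)) : maxscore 𝓕 ([] : List V) = 0 := by
  have h : maxscore 𝓕 ([] : List V) = sSup (∅ : Set ℕ) := by
    unfold maxscore
    congr 1
    ext n
    simp only [Set.mem_setOf_eq, Set.mem_empty_iff_false, iff_false, not_exists]
    rintro F ⟨-, u, hne, hu, -⟩
    exact hne (List.prefix_nil.mp hu)
  rw [h, csSup_empty]
  rfl

lemma maxscore_le_of_prefix {𝓕 : Set (Set V)} {u w : List V} (h : u <+: w) :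
    maxscore 𝓕 u ≤ maxscore 𝓕 w := by
  rcases Set.eq_empty_or_nonempty
      {n | ∃ F ∈ 𝓕, ∃ x : List V, x ≠ [] ∧ x <+: u ∧ n = score F x} with he | hne
  · simp [maxscore, he]
  · refine csSup_le_csSup (maxscoreSet_bdd 𝓕 w) hne ?_
    rintro n ⟨F, hF, x, hxne, hx, rfl⟩
    exact ⟨F, hF, x, hxne, hx.trans h, rfl⟩

lemma occ_append (a b : List V) : occ (a ++ b) = occ a ∪ occ b := by
  ext x; simp [occ]

lemma occ_subset_of_suffix {a b : List V} (h : a <:+ b) : occ a ⊆ occ b :=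
  fun x hx => h.subset hx

lemma prefix_dropLast_of_ne {u w : List V} (h : u <+: w) (hne : u ≠ w) :
    u <+: w.dropLast := by
  obtain ⟨t, rfl⟩ := h
  have ht : t ≠ [] := by rintro rfl; simp at hne
  rw [List.dropLast_append_of_ne_nil ht]
  exact ⟨t.dropLast, rfl⟩

lemma flatten_drop_suffix (xs : List (List V)) (n : ℕ) :
    (xs.drop n).flatten <:+ xs.flatten :=
  ⟨(xs.take n).flatten, by rw [← List.flatten_append, List.take_append_drop]⟩

lemma score3_subset {w a b c y1 y2 c' : List V} {F G : Set V}
    (hd : maxscore (Set.univ : Set (Set V)) w.dropLast < 3)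
    (ha : occ a = F) (hb : occ b = F) (hc : occ c = F)
    (hy1 : occ y1 = G) (hy2 : occ y2 = G) (hc' : occ c' = G)
    (hcne : c ≠ []) (hy1ne : y1 ≠ []) (hy2ne : y2 ≠ [])
    (hX : a ++ b ++ c <:+ w) (hY : y1 ++ y2 ++ c' <:+ w)
    (hcc : c <:+ c') : F = G := by
  have hFG : F ⊆ G := by
    rw [← hc, ← hc']; exact occ_subset_of_suffix hcc
  have hbcw : b ++ c <:+ w :=
    List.IsSuffix.trans (show b ++ c <:+ a ++ b ++ c from ⟨a, by rw [List.append_assoc]⟩) hX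
  have hc'w : c' <:+ w :=
    List.IsSuffix.trans (show c' <:+ y1 ++ y2 ++ c' from ⟨y1 ++ y2, rfl⟩) hY
  rcases List.suffix_or_suffix_of_suffix hc'w hbcw with h1 | h1
  · refine hFG.antisymm ?_
    have := occ_subset_of_suffix h1
    rw [hc', occ_append, hb, hc, Set.union_self] at this
    exact this
  rcases List.suffix_or_suffix_of_suffix hc'w hX with h2 | h2
  · refine hFG.antisymm ?_
    have := occ_subset_of_suffix h2
    rw [hc', occ_append, occ_append, ha, hb, hc, Set.union_self, Set.union_self] at this
    exact this
  obtain ⟨z, hz⟩ := h2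
  rcases eq_or_ne z [] with rfl | hzne
  · simp only [List.nil_append] at hz
    rw [← hc', ← hz, occ_append, occ_append, ha, hb, hc, Set.union_self, Set.union_self]
  exfalso
  obtain ⟨p, hp⟩ := hY
  set u := p ++ (y1 ++ (y2 ++ (z ++ (a ++ b)))) with hu
  have hw : w = u ++ c := by
    rw [← hp, ← hz]; simp only [hu, List.append_assoc]
  have hzab : occ (z ++ a ++ b) = G := by
    have h1' : occ c' = occ z ∪ (F ∪ (F ∪ F)) := by
      rw [← hz]; simp only [occ_append, List.append_assoc]
      rw [ha, hb, hc]
    rw [← hc', h1', occ_append, occ_append, ha, hb]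
    simp [Set.union_assoc]
  have hscore : 3 ≤ score G u := by
    have h3 := le_score (F := G) (w := u) (xs := [y1, y2, z ++ a ++ b]) ?_ ?_
    · simpa using h3
    · intro x hx
      simp only [List.mem_cons, List.not_mem_nil, or_false] at hx
      rcases hx with rfl | rfl | rfl
      · exact ⟨hy1ne, hy1⟩
      · exact ⟨hy2ne, hy2⟩
      · refine ⟨?_, hzab⟩
        simp [hzne]
    · refine ⟨p, ?_⟩
      simp [hu, List.append_assoc]
  have hune : u ≠ [] := by simp [hu, hy1ne]
  have hupre : u <+: w.dropLast := by
    rw [hw, List.dropLast_append_of_ne_nil hcne]; exact ⟨c.dropLast, rfl⟩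
  have := hscore.trans (score_le_maxscore (Set.mem_univ G) hune hupre)
  omega

lemma exists_three_blocks {F : Set V} {w : List V} (h : 3 ≤ score F w) :
    ∃ a b c : List V, (a ≠ [] ∧ occ a = F) ∧ (b ≠ [] ∧ occ b = F) ∧
      (c ≠ [] ∧ occ c = F) ∧ a ++ b ++ c <:+ w := by
  obtain ⟨xs, hlen, hprop, hsuf⟩ := score_witness F w
  set ys := xs.drop (xs.length - 3) with hys
  have hlen3 : ys.length = 3 := by
    simp only [hys, List.length_drop]; omega
  have hsuf' : ys.flatten <:+ w := (flatten_drop_suffix xs _).trans hsuf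
  have hmem : ∀ x ∈ ys, x ≠ [] ∧ occ x = F := fun x hx => hprop x (List.mem_of_mem_drop hx)
  obtain ⟨a, b, c, hy⟩ := List.length_eq_three.mp hlen3
  rw [hy] at hsuf' hmem
  refine ⟨a, b, c, hmem a (by simp), hmem b (by simp), hmem c (by simp), ?_⟩
  simpa [List.append_assoc] using hsuf'

lemma score_three_unique {w : List V}
    (hd : maxscore (Set.univ : Set (Set V)) w.dropLast < 3)
    {F G : Set V} (hF : 3 ≤ score F w) (hG : 3 ≤ score G w) : F = G := by
  obtain ⟨a, b, c, ⟨hane, ha⟩, ⟨hbne, hb⟩, ⟨hcne, hc⟩, hX⟩ := exists_three_blocks hF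
  obtain ⟨a', b', c', ⟨hane', ha'⟩, ⟨hbne', hb'⟩, ⟨hcne', hc'⟩, hY⟩ := exists_three_blocks hG
  have hcw : c <:+ w :=
    List.IsSuffix.trans (show c <:+ a ++ b ++ c from ⟨a ++ b, rfl⟩) hX
  have hcw' : c' <:+ w :=
    List.IsSuffix.trans (show c' <:+ a' ++ b' ++ c' from ⟨a' ++ b', rfl⟩) hY
  rcases List.suffix_or_suffix_of_suffix hcw hcw' with h | h
  · exact score3_subset hd ha hb hc ha' hb' hc' hcne hane' hbne' hX hY h
  · exact (score3_subset hd ha' hb' hc' ha hb hc hcne' hane hbne hY hX h).symm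

lemma score_eq_three_of_maxscore {w : List V}
    (hms : maxscore (Set.univ : Set (Set V)) w = 3)
    (hms' : maxscore (Set.univ : Set (Set V)) w.dropLast < 3) :
    ∃ F : Set V, score F w = 3 := by
  obtain ⟨F, -, u, hne, hu, heq⟩ :=
    maxscore_witness (𝓕 := (Set.univ : Set (Set V))) (w := w) (by rw [hms]; norm_num)
  rw [hms] at heq
  rcases eq_or_ne u w with rfl | hneq
  · exact ⟨F, heq.symm⟩
  · exfalso
    have := score_le_maxscore (Set.mem_univ F) hne (prefix_dropLast_of_ne hu hneq)
    omega

/- ## Extension of a finite consistent play to an infinite one -/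

def extL (σ : Strategy V) (v : V) (w : List V) : ℕ → List V
  | 0 => w
  | n + 1 =>
      let l := extL σ v w n
      l ++ [σ l.dropLast (l.getLastD v)]

noncomputable def extP (σ : Strategy V) (v : V) (w : List V) (n : ℕ) : V :=
  (extL σ v w n).getD n v

lemma extL_length (σ : Strategy V) (v : V) (w : List V) (n : ℕ) :
    (extL σ v w n).length = w.length + n := by
  induction n with
  | zero => rfl
  | succ n ih => simp [extL, ih]; omega

lemma extL_prefix (σ : Strategy V) (v : V) (w : List V) {m n : ℕ} (h : m ≤ n) :
    extL σ v w m <+: extL σ v w n := by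
  induction n with
  | zero => simp [Nat.le_zero.mp h]
  | succ n ih =>
    rcases Nat.lt_or_ge m (n+1) with h' | h'
    · exact (ih (by omega)).trans ⟨_, rfl⟩
    · have : m = n + 1 := by omega
      simp [this]

lemma getLastD_eq_getD (l : List V) : ∀ v : V, l.getLastD v = l.getD (l.length - 1) v := by
  induction l with
  | nil => intro v; rfl
  | cons a t ih =>
    intro v
    cases t with
    | nil => rfl
    | cons b s =>
      rw [List.getLastD_cons, ih a]
      simp [List.getD, List.getElem?_cons_succ]

section
variable (σ : Strategy V) (v : V) (w : List V) (hw : w ≠ [])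
include hw

lemma extP_eq_getD {n m : ℕ} (h : n < w.length + m) :
    extP σ v w n = (extL σ v w m).getD n v := by
  have h1 : n < (extL σ v w n).length := by
    rw [extL_length]
    have := List.length_pos_iff.mpr hw
    omega
  have h2 : n < (extL σ v w m).length := by rw [extL_length]; omega
  rcases le_total n m with hnm | hmn
  · have hpre := extL_prefix σ v w hnm
    rw [extP, List.getD_eq_getElem _ _ h1, List.getD_eq_getElem _ _ h2]
    exact hpre.getElem h1
  · have hpre := extL_prefix σ v w hmn
    rw [extP, List.getD_eq_getElem _ _ h1, List.getD_eq_getElem _ _ h2]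
    exact (hpre.getElem h2).symm

lemma range_map_extP (n : ℕ) (m : ℕ) (h : n ≤ w.length + m) :
    (List.range n).map (extP σ v w) = (extL σ v w m).take n := by
  apply List.ext_getElem
  · simp only [List.length_map, List.length_range, List.length_take, extL_length]
    have := List.length_pos_iff.mpr hw
    omega
  · intro k h1 h2
    simp only [List.getElem_map, List.getElem_range, List.getElem_take]
    simp only [List.length_map, List.length_range] at h1
    have hk : k < (extL σ v w m).length := by
      rw [extL_length]; have := List.length_pos_iff.mpr hw; omega
    rw [extP_eq_getD σ v w hw (show k < w.length + m by omega), List.getD_eq_getElem _ _ hk]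

lemma range_map_extP_len :
    (List.range w.length).map (extP σ v w) = w := by
  rw [range_map_extP σ v w hw w.length w.length (by omega)]
  have hpre : w <+: extL σ v w w.length := extL_prefix σ v w (Nat.zero_le _)
  exact (List.prefix_iff_eq_take.mp hpre).symm

end

lemma getD_concat_length (l : List V) (x v : V) : (l ++ [x]).getD l.length v = x := by
  rw [List.getD_eq_getElem _ _ (by simp)]
  exact List.getElem_concat_length rfl _

section
variable {G : Arena V} {i : Fin 2} {σ : Strategy V} {v : V} {w : List V}

lemma extP_succ_of_ge (hw : w ≠ []) (hσ : G.Legal σ) {n : ℕ} (h : w.length ≤ n + 1) :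
    extP σ v w (n + 1) = σ ((List.range n).map (extP σ v w)) (extP σ v w n) ∧
      G.E (extP σ v w n) (extP σ v w (n + 1)) := by
  set k := n + 1 - w.length with hk
  have hwpos := List.length_pos_iff.mpr hw
  have hlenk : (extL σ v w k).length = n + 1 := by rw [extL_length]; omega
  have h1 : extP σ v w (n + 1) =
      σ ((extL σ v w k).dropLast) ((extL σ v w k).getLastD v) := by
    rw [extP_eq_getD σ v w hw (show n + 1 < w.length + (k + 1) by omega)]
    show (extL σ v w k ++ [_]).getD (n+1) v = _
    rw [← hlenk, getD_concat_length]
  have h2 : (extL σ v w k).getLastD v = extP σ v w n := by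
    rw [getLastD_eq_getD, hlenk, extP_eq_getD σ v w hw (show n < w.length + k by omega)]
    norm_num
  have h3 : (extL σ v w k).dropLast = (List.range n).map (extP σ v w) := by
    rw [List.dropLast_eq_take, hlenk, range_map_extP σ v w hw n k (by omega)]
    norm_num
  constructor
  · rw [h1, h2, h3]
  · rw [h1, h2]
    exact hσ _ _

lemma extP_isPlay (hw : w.head? = some v) (hσ : G.Legal σ) (hchain : w.Chain' G.E) :
    G.IsPlay v (extP σ v w) := by
  have hwne : w ≠ [] := by rintro rfl; simp at hw
  have hwpos := List.length_pos_iff.mpr hwne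
  constructor
  · rw [extP_eq_getD σ v w hwne (show 0 < w.length + 0 by omega)]
    show w.getD 0 v = v
    cases w with
    | nil => simp at hw
    | cons a t => simpa using (by simpa using hw : a = v)
  · intro n
    rcases Nat.lt_or_ge (n + 1) w.length with h | h
    · have e1 : extP σ v w n = w[n]'(by omega) := by
        rw [extP_eq_getD σ v w hwne (show n < w.length + 0 by omega)]
        exact List.getD_eq_getElem _ _ (by rw [extL_length]; omega)
      have e2 : extP σ v w (n+1) = w[n+1]'h := by
        rw [extP_eq_getD σ v w hwne (show n + 1 < w.length + 0 by omega)]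
        exact List.getD_eq_getElem _ _ (by rw [extL_length]; omega)
      rw [e1, e2]
      have := List.isChain_iff_getElem.mp hchain n (by omega)
      simpa using this
    · exact (extP_succ_of_ge hwne hσ h).2

lemma extP_consistent (hw : w.head? = some v) (hσ : G.Legal σ)
    (hcons : G.ConsistentFin i σ w) :
    G.ConsistentInf i σ (extP σ v w) := by
  have hwne : w ≠ [] := by rintro rfl; simp at hw
  intro n hpos
  rcases Nat.lt_or_ge (n + 1) w.length with h | h
  · have e1 : extP σ v w n = w[n]'(by omega) := by
      rw [extP_eq_getD σ v w hwne (show n < w.length + 0 by omega)]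
      exact List.getD_eq_getElem _ _ (by rw [extL_length]; omega)
    have e2 : extP σ v w (n+1) = w[n+1]'h := by
      rw [extP_eq_getD σ v w hwne (show n + 1 < w.length + 0 by omega)]
      exact List.getD_eq_getElem _ _ (by rw [extL_length]; omega)
    have e3 : (List.range n).map (extP σ v w) = w.take n := by
      rw [range_map_extP σ v w hwne n 0 (by omega)]
      rfl
    have hpref : w.take n ++ [w[n]'(by omega), w[n+1]'h] <+: w := by
      have e4 := List.take_concat_get (l := w) (i := n) (by omega)
      have e5 := List.take_concat_get (l := w) (i := n+1) h
      have key : w.take n ++ [w[n]'(by omega), w[n+1]'h] = w.take (n+1+1) := by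
        rw [show [w[n]'(by omega), w[n+1]'h] = [w[n]'(by omega)] ++ [w[n+1]'h] from rfl,
          ← List.append_assoc, ← List.concat_eq_append, ← List.concat_eq_append, e4, e5]
      rw [key]
      exact List.take_prefix _ _
    rw [e1, e2, e3]
    rw [e1] at hpos
    exact hcons _ _ _ hpref hpos
  · exact (extP_succ_of_ge hwne hσ h).1

end


/-- If `σ` is a winning strategy for Player `i` from `v` in
the Muller game `(G, 𝓕₀, 𝓕₁)` such that every consistent play `ρ` from `v`
satisfies `maxscore_{𝓕_{1-i}}(ρ) ≤ 2`, then Player `i` wins the finite-time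
Muller game `(G, 𝓕₀, 𝓕₁, 3)` from `v`; in particular, for every consistent play
`ρ` from `v`, the shortest prefix `w` of `ρ` with `maxscore_{2^V}(w) = 3`
satisfies `score F w = 3` for a unique set `F`, and this `F` belongs to `𝓕ᵢ`. -/
theorem stmt_15 {V : Type u} [Fintype V] (G : Arena V)
    (F0 F1 : Set (Set V)) (hpart : F0 ∪ F1 = Set.univ) (hdisj : Disjoint F0 F1)
    (i : Fin 2) (v : V) (σ : Strategy V) (hσ : G.Legal σ)
    (hwin : ∀ ρ : ℕ → V, G.IsPlay v ρ → G.ConsistentInf i σ ρ →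
      limitSet ρ ∈ (if i = 0 then F0 else F1))
    (hbound : ∀ ρ : ℕ → V, G.IsPlay v ρ → G.ConsistentInf i σ ρ →
      maxscoreInf (if i = 0 then F1 else F0) ρ ≤ 2) :
    FTWinFrom G i (if i = 0 then F0 else F1) 3 v ∧
      ∀ ρ : ℕ → V, G.IsPlay v ρ → G.ConsistentInf i σ ρ →
        ∀ n : ℕ, maxscore (Set.univ : Set (Set V)) ((List.range n).map ρ) = 3 →
          (∀ m < n, maxscore (Set.univ : Set (Set V)) ((List.range m).map ρ) ≠ 3) →
          (∃! F : Set V, score F ((List.range n).map ρ) = 3) ∧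
            ∀ F : Set V, score F ((List.range n).map ρ) = 3 →
              F ∈ (if i = 0 then F0 else F1) := by
  
  have main : ∀ (ρ : ℕ → V), G.IsPlay v ρ → G.ConsistentInf i σ ρ →
      ∀ (m : ℕ) (F : Set V), score F ((List.range (m+1)).map ρ) = 3 →
      F ∈ (if i = 0 then F0 else F1) := by
    intro ρ hplay hconsρ m F h3
    have h2 := hbound ρ hplay hconsρ
    have hnot : F ∉ (if i = 0 then F1 else F0) := by
      intro hF
      have hle : (3 : ℕ∞) ≤ maxscoreInf (if i = 0 then F1 else F0) ρ := by
        have hcast : ((score F ((List.range (m+1)).map ρ) : ℕ) : ℕ∞) = 3 := by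
          exact_mod_cast h3
        rw [← hcast]
        refine le_trans
          (le_iSup (fun n : ℕ => ((score F ((List.range (n+1)).map ρ) : ℕ) : ℕ∞)) m) ?_
        exact le_iSup₂ (f := fun (F : Set V) (_ : F ∈ (if i = 0 then F1 else F0)) =>
          ⨆ n : ℕ, ((score F ((List.range (n+1)).map ρ) : ℕ) : ℕ∞)) F hF
      have h32 := hle.trans h2
      norm_num at h32
    have huniv : F ∈ F0 ∪ F1 := hpart ▸ Set.mem_univ F
    fin_cases i
    · simp only [if_pos rfl] at hnot ⊢
      exact huniv.resolve_right hnot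
    · have h10 : (1 : Fin 2) ≠ 0 := by decide
      simp only [if_neg h10] at hnot ⊢
      exact huniv.resolve_left hnot
  constructor
  · refine ⟨σ, hσ, ?_⟩
    intro w hft hhead hconsw
    obtain ⟨hchain, hms, hms'⟩ := hft
    obtain ⟨F, hF3⟩ := score_eq_three_of_maxscore hms hms'
    have hwne : w ≠ [] := by rintro rfl; simp at hhead
    obtain ⟨m, hm⟩ : ∃ m, w.length = m + 1 :=
      ⟨w.length - 1, by have := List.length_pos_iff.mpr hwne; omega⟩
    have hplay := extP_isPlay hhead hσ hchain
    have hconsInf := extP_consistent hhead hσ hconsw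
    have hw' : (List.range (m+1)).map (extP σ v w) = w := by
      rw [← hm]; exact range_map_extP_len σ v w hwne
    exact ⟨F, main _ hplay hconsInf m F (by rw [hw']; exact hF3), hF3⟩
  · intro ρ hplay hconsρ n hms3 hmin
    have hne0 : n ≠ 0 := by
      rintro rfl
      rw [show (List.range 0).map ρ = [] by simp, maxscore_nil] at hms3
      omega
    obtain ⟨m, rfl⟩ : ∃ m, n = m + 1 := ⟨n - 1, by omega⟩
    have hdl : ((List.range (m+1)).map ρ).dropLast = (List.range m).map ρ := by
      rw [List.range_succ, List.map_append]
      simp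
    have hmlt : maxscore (Set.univ : Set (Set V)) ((List.range (m+1)).map ρ).dropLast < 3 := by
      rw [hdl]
      have hpre : (List.range m).map ρ <+: (List.range (m+1)).map ρ := by
        refine List.IsPrefix.map ρ ?_
        refine List.prefix_iff_eq_take.mpr ?_
        rw [List.take_range]
        simp
      have hle := maxscore_le_of_prefix (𝓕 := (Set.univ : Set (Set V))) hpre
      have hne := hmin m (by omega)
      omega
    obtain ⟨F, hF3⟩ := score_eq_three_of_maxscore hms3 hmlt
    refine ⟨⟨F, hF3, fun G' hG' => score_three_unique hmlt (by omega) (by omega)⟩, ?_⟩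
    intro G' hG'
    exact main ρ hplay hconsρ m G' hG'
end

section
/- For every n ≥ 1, consider the Muller game 𝒢_n = (G_n, 𝓕₀ⁿ, 𝓕₁ⁿ) where G_n = (V_n, V_n, ∅, E_n) with V_n = {0,…,n}, E_n = {(i+1, i) : i < n} ∪ {(0,n), (1,n)} (all vertices belong to Player 0), 𝓕₀ⁿ = {V_n} and 𝓕₁ⁿ = 2^{V_n} \ {V_n}. Then Player 0 has a positional winning strategy σ for 𝒢_n from every vertex such that maxscore_{𝓕₁ⁿ}(play(v, σ, τ)) ≤ 2 for every vertex v ∈ V_n and every strategy τ of Player 1. -/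
/- Common definitions for finite-time Muller games, following
   McNaughton / Fearnley-Zimmermann. -/

universe u

variable {V : Type u}

/-- The arena `G_n` with vertices `{0, …, n}` (all belonging to Player 0) and
edges `{(i+1, i) : i < n} ∪ {(0, n), (1, n)}`. -/
def Gn (n : ℕ) : Arena (Fin (n + 1)) where
  V0 := Set.univ
  E := fun v u => (v.val = u.val + 1) ∨ ((v.val = 0 ∨ v.val = 1) ∧ u.val = n)
  exists_succ := by
    intro v
    rcases v with ⟨j, hj⟩
    cases j with
    | zero => exact ⟨⟨n, Nat.lt_succ_self n⟩, Or.inr ⟨Or.inl rfl, rfl⟩⟩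
    | succ m => exact ⟨⟨m, by omega⟩, Or.inl rfl⟩

open Fin.NatCast Fin.CommRing

/-- In the Muller game `𝒢_n = (G_n, {V_n}, 2^{V_n} ∖ {V_n})`,
Player 0 has a positional winning strategy `σ` from every vertex such that
`maxscore_{𝓕₁ⁿ}(play(v, σ, τ)) ≤ 2` for every vertex `v` and every strategy `τ`
of Player 1. -/
theorem stmt_16 (n : ℕ) (hn : 1 ≤ n) :
    ∃ σ : Strategy (Fin (n + 1)), (Gn n).Legal σ ∧
      (∀ (w w' : List (Fin (n + 1))) (u : Fin (n + 1)), σ w u = σ w' u) ∧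
      (∀ (v : Fin (n + 1)) (ρ : ℕ → Fin (n + 1)),
        (Gn n).IsPlay v ρ → (Gn n).ConsistentInf 0 σ ρ →
          limitSet ρ ∈ ({Set.univ} : Set (Set (Fin (n + 1))))) ∧
      ∀ (v : Fin (n + 1)) (τ : Strategy (Fin (n + 1))), (Gn n).Legal τ →
        maxscoreInf {F : Set (Fin (n + 1)) | F ≠ Set.univ}
          (playOf (Gn n) 0 σ τ v) ≤ 2 := by
  classical
  have hpos : ∀ u : Fin (n + 1), u ∈ (Gn n).pos 0 := by
    intro u; simp [Arena.pos, Gn]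
  have hsub1 : ∀ u : Fin (n + 1), (u - 1).val = (u.val + n) % (n + 1) := by
    intro u
    have h1 : ((1 : Fin (n + 1))).val = 1 := by
      rw [Fin.val_one']; exact Nat.mod_eq_of_lt (by omega)
    rw [Fin.sub_def]
    simp only [h1]
    congr 1
    omega
  refine ⟨fun _ u => u - 1, ?_, fun _ _ _ => rfl, ?_, ?_⟩
  · -- legality
    intro w u
    show (Gn n).E u (u - 1)
    have hv := hsub1 u
    rcases Nat.eq_zero_or_pos u.val with h0 | hpos'
    · right
      refine ⟨Or.inl h0, ?_⟩
      rw [hv, h0, Nat.zero_add, Nat.mod_eq_of_lt (by omega)]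
    · left
      rw [hv]
      have : u.val + n = (u.val - 1) + (n + 1) := by omega
      rw [this, Nat.add_mod_right, Nat.mod_eq_of_lt (by omega)]
      omega
  · -- Muller winning
    intro v ρ hplay hcons
    have hρ : ∀ k, ρ k = v - (k : Fin (n + 1)) := by
      intro k
      induction k with
      | zero => simpa using hplay.1
      | succ k ih =>
        have := hcons k (hpos _)
        rw [this, ih]
        push_cast
        ring
    have : limitSet ρ = Set.univ := by
      apply Set.eq_univ_of_forall
      intro u N
      refine ⟨(v - u).val + (N + 1) * (n + 1), ?_, ?_⟩
      · have : N + 1 ≤ (N + 1) * (n + 1) := Nat.le_mul_of_pos_right _ (by omega)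
        omega
      · rw [hρ, Nat.cast_add, Nat.cast_mul, Fin.natCast_self, mul_zero, add_zero,
          Fin.cast_val_eq_self, sub_sub_cancel]
    simp [this]
  · -- score bound
    intro v τ hτ
    set σ' : Strategy (Fin (n + 1)) := fun _ u => u - 1 with hσ'
    set ρ := playOf (Gn n) 0 σ' τ v with hρdef
    have hstep : ∀ k, ρ (k + 1) = ρ k - 1 := by
      intro k
      have e : playList (Gn n) 0 σ' τ v (k + 1) = playList (Gn n) 0 σ' τ v k ++
          [σ' (playList (Gn n) 0 σ' τ v k).dropLast
            ((playList (Gn n) 0 σ' τ v k).getLastD v)] := by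
        simp only [playList]
        rw [if_pos (hpos _)]
      show (playList (Gn n) 0 σ' τ v (k + 1)).getLastD v = _
      rw [e, List.getLastD_concat]
      rfl
    have hρ : ∀ k, ρ k = v - (k : Fin (n + 1)) := by
      intro k
      induction k with
      | zero => simp [hρdef, playOf, playList]
      | succ k ih =>
        rw [hstep k, ih]
        push_cast
        ring
    rw [maxscoreInf]
    refine iSup₂_le fun F hF => iSup_le fun m => ?_
    have hscore : score F ((List.range (m + 1)).map ρ) ≤ 2 := by
      set w := (List.range (m + 1)).map ρ with hwdef
      have hwlen : w.length = m + 1 := by simp [hwdef]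
      have hw : ∀ i (hi : i < m + 1), w[i]'(by omega) = v - (i : Fin (n + 1)) := by
        intro i hi
        simp [hwdef, hρ]
      rw [score]
      refine csSup_le' ?_
      rintro k ⟨xs, hlen, hblocks, hsuf⟩
      rcases xs with _ | ⟨x₁, _ | ⟨x₂, r⟩⟩
      · simp at hlen; omega
      · simp at hlen; omega
      exfalso
      obtain ⟨hx1ne, hx1occ⟩ := hblocks x₁ (by simp)
      obtain ⟨hx2ne, hx2occ⟩ := hblocks x₂ (by simp)
      obtain ⟨p, hp⟩ := hsuf
      simp only [List.flatten_cons] at hp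
      have hplen : p.length + (x₁.length + (x₂.length + r.flatten.length)) = m + 1 := by
        have := congrArg List.length hp
        simpa [hwlen] using this
      set t := p.length with ht
      set L := x₁.length with hL
      have hx2pos : 0 < x₂.length := List.length_pos_iff.mpr hx2ne
      -- elements of x₁
      have hx1get : ∀ j (hj : j < L), x₁[j]'hj = v - ((t + j : ℕ) : Fin (n + 1)) := by
        intro j hj
        have hidx : t + j < m + 1 := by omega
        have hlenP : t + j < (p ++ (x₁ ++ (x₂ ++ r.flatten))).length := by
          rw [hp]; omega
        have h1 : (p ++ (x₁ ++ (x₂ ++ r.flatten)))[t + j]'hlenP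
            = v - ((t + j : ℕ) : Fin (n + 1)) :=
          (List.getElem_of_eq hp hlenP).trans (hw _ hidx)
        rw [List.getElem_append_right (by omega : p.length ≤ t + j)] at h1
        simp only [← ht, Nat.add_sub_cancel_left] at h1
        rwa [List.getElem_append_left hj] at h1
      -- head of x₂
      have hx2head : x₂[0]'hx2pos = v - ((t + L : ℕ) : Fin (n + 1)) := by
        have hidx : t + L < m + 1 := by omega
        have hlenP : t + L < (p ++ (x₁ ++ (x₂ ++ r.flatten))).length := by
          rw [hp]; omega
        have h1 : (p ++ (x₁ ++ (x₂ ++ r.flatten)))[t + L]'hlenP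
            = v - ((t + L : ℕ) : Fin (n + 1)) :=
          (List.getElem_of_eq hp hlenP).trans (hw _ hidx)
        rw [List.getElem_append_right (by omega : p.length ≤ t + L)] at h1
        simp only [← ht, Nat.add_sub_cancel_left] at h1
        rw [List.getElem_append_right (by omega : x₁.length ≤ L)] at h1
        simp only [← hL, Nat.sub_self] at h1
        rwa [List.getElem_append_left hx2pos] at h1
      -- the head of x₂ lies in occ x₁ = F
      have hmem : v - ((t + L : ℕ) : Fin (n + 1)) ∈ x₁ := by
        have h2 : x₂[0]'hx2pos ∈ occ x₂ := List.getElem_mem _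
        rw [hx2occ, ← hx1occ] at h2
        rwa [hx2head] at h2
      obtain ⟨j, hj, hjeq⟩ := List.mem_iff_getElem.mp hmem
      rw [hx1get j hj] at hjeq
      have hcast : ((t + j : ℕ) : Fin (n + 1)) = ((t + L : ℕ) : Fin (n + 1)) :=
        sub_right_injective hjeq
      have hmod : (t + j) % (n + 1) = (t + L) % (n + 1) := by
        have := congrArg Fin.val hcast
        rwa [Fin.val_natCast, Fin.val_natCast] at this
      rcases le_or_gt L n with hLn | hLn
      · have hdvd : (n + 1) ∣ (t + L) - (t + j) :=
          (Nat.modEq_iff_dvd' (by omega)).mp hmod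
        have := Nat.le_of_dvd (by omega) hdvd
        omega
      · -- L ≥ n + 1, so occ x₁ = univ, contradicting F ≠ univ
        apply hF
        rw [← hx1occ]
        apply Set.eq_univ_of_forall
        intro u
        show u ∈ x₁
        refine List.mem_iff_getElem.mpr ⟨((v - (t : Fin (n+1))) - u).val, by
          have := (((v - (t : Fin (n+1))) - u)).isLt; omega, ?_⟩
        rw [hx1get _ _]
        push_cast
        ring
    calc (score F ((List.range (m + 1)).map ρ) : ℕ∞) ≤ (2 : ℕ) := by exact_mod_cast hscore
      _ = 2 := by norm_num
end
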